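/- Let a > 0, ν > 0 and L be real numbers, and let f : (0,∞) → ℝ be a continuous nonnegative function such that t^{ν+1} f(t) → L as t → ∞. Then t^{ν+1} e^{a t} ∫_t^∞ e^{−a s} f(s) ds → L/a as t → ∞. -/

import Mathlib

open MeasureTheory Filter Set Real Topology

/-- Let `a > 0`, `ν > 0` and `L` be real numbers, and let `f : (0,∞) → ℝ` be a continuous
nonnegative function such that `t^(ν+1) f(t) → L` as `t → ∞`.  Then
`t^(ν+1) e^(at) ∫_t^∞ e^(−as) f(s) ds → L/a` as `t → ∞`. -/
theorem tail_integral_asymptotics_polynomial (a ν L : ℝ) (ha : 0 < a) (hν : 0 < ν)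
    (f : ℝ → ℝ) (hf : ContinuousOn f (Set.Ioi 0)) (hf0 : ∀ t ∈ Set.Ioi (0 : ℝ), 0 ≤ f t)
    (hlim : Filter.Tendsto (fun t : ℝ => t ^ (ν + 1) * f t) Filter.atTop (nhds L)) :
    Filter.Tendsto
      (fun t : ℝ => t ^ (ν + 1) * Real.exp (a * t) * ∫ s in Set.Ioi t, Real.exp (-a * s) * f s)
      Filter.atTop (nhds (L / a)) := by
  set F : ℝ → ℝ := fun s => Real.exp (-a * s) * f s with hFdef
  have hFc : ContinuousOn F (Set.Ioi 0) :=
    (Real.continuous_exp.comp (continuous_const.mul continuous_id)).continuousOn.mul hf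
  -- bound on f for large s
  obtain ⟨T, hT1, hTb⟩ : ∃ T : ℝ, 1 ≤ T ∧ ∀ s, T ≤ s → f s ≤ |L| + 1 := by
    have h1 : ∀ᶠ t : ℝ in atTop, t ^ (ν + 1) * f t ≤ |L| + 1 := by
      filter_upwards [hlim.eventually (gt_mem_nhds (lt_add_one L))] with t h
      have := le_abs_self L
      linarith
    obtain ⟨T, hT⟩ := (h1.and (eventually_ge_atTop (1:ℝ))).exists_forall_of_atTop
    refine ⟨max T 1, le_max_right _ _, fun s hs => ?_⟩
    have hsT : T ≤ s := le_trans (le_max_left _ _) hs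
    have hs1 : (1:ℝ) ≤ s := le_trans (le_max_right _ _) hs
    have h2 := (hT s hsT).1
    have hfs : 0 ≤ f s := hf0 s (by simpa using lt_of_lt_of_le one_pos hs1)
    have hp : (1:ℝ) ≤ s ^ (ν + 1) := Real.one_le_rpow hs1 (by linarith)
    nlinarith
  -- integrability of F on tails
  have hInt : ∀ t : ℝ, 0 < t → IntegrableOn F (Set.Ioi t) := by
    intro t ht
    set T' := max T t with hT'
    have htT' : t ≤ T' := le_max_right _ _
    have h1 : IntegrableOn F (Set.Ioc t T') := by
      have : IntegrableOn F (Set.Icc t T') :=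
        (hFc.mono (fun x hx => lt_of_lt_of_le ht hx.1)).integrableOn_Icc
      exact this.mono_set Set.Ioc_subset_Icc_self
    have h2 : IntegrableOn F (Set.Ioi T') := by
      have hg : IntegrableOn (fun s => (|L| + 1) * Real.exp (-a * s)) (Set.Ioi T') :=
        (exp_neg_integrableOn_Ioi T' ha).const_mul _
      refine Integrable.mono hg ((hFc.mono ?_).aestronglyMeasurable measurableSet_Ioi) ?_
      · exact fun x hx => lt_of_lt_of_le ht (le_trans htT' (le_of_lt hx))
      · filter_upwards [ae_restrict_mem measurableSet_Ioi] with s hs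
        have hsT : T ≤ s := le_trans (le_max_left _ _) (le_of_lt hs)
        have hs0 : (0:ℝ) < s := lt_of_lt_of_le ht (le_trans htT' (le_of_lt hs))
        have hfs : 0 ≤ f s := hf0 s hs0
        have hb := hTb s hsT
        rw [Real.norm_eq_abs, Real.norm_eq_abs, abs_of_nonneg (by positivity),
          abs_of_nonneg (by positivity : (0:ℝ) ≤ (|L| + 1) * Real.exp (-a * s))]
        rw [mul_comm ((|L|:ℝ) + 1) _]
        exact mul_le_mul_of_nonneg_left hb (Real.exp_pos _).le
    have := h1.union h2
    rwa [Set.Ioc_union_Ioi_eq_Ioi htT'] at this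
  set g : ℝ → ℝ := fun t => ∫ s in Set.Ioi t, F s with hgdef
  -- decomposition
  have hdecomp : ∀ b u : ℝ, 0 < b → b ≤ u → g b = (∫ x in b..u, F x) + g u := by
    intro b u hb hbu
    rw [intervalIntegral.integral_of_le hbu, hgdef]
    simp only
    rw [← setIntegral_union (Set.Ioc_disjoint_Ioi le_rfl) measurableSet_Ioi
      ((hInt b hb).mono_set Set.Ioc_subset_Ioi_self) (hInt u (lt_of_lt_of_le hb hbu)),
      Set.Ioc_union_Ioi_eq_Ioi hbu]
  -- derivative of g
  have hg' : ∀ t : ℝ, 0 < t → HasDerivAt g (-F t) t := by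
    intro t ht
    have hb : (0:ℝ) < t / 2 := by linarith
    have hφ : HasDerivAt (fun u => ∫ x in (t/2)..u, F x) (F t) t := by
      refine intervalIntegral.integral_hasDerivAt_right ?_ ?_ (hFc.continuousAt (Ioi_mem_nhds ht))
      · rw [intervalIntegrable_iff_integrableOn_Ioc_of_le (by linarith)]
        exact (hInt _ hb).mono_set Set.Ioc_subset_Ioi_self
      · exact ⟨Set.Ioi 0, Ioi_mem_nhds ht, hFc.aestronglyMeasurable measurableSet_Ioi⟩
    have h2 : HasDerivAt (fun u => g (t/2) - ∫ x in (t/2)..u, F x) (-F t) t := by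
      have := (hasDerivAt_const t (g (t/2))).sub hφ
      rw [zero_sub] at this
      exact this
    refine h2.congr_of_eventuallyEq ?_
    filter_upwards [Ioi_mem_nhds (by linarith : t/2 < t)] with u hu
    have := hdecomp (t/2) u hb (le_of_lt hu)
    linarith
  -- h and its derivative
  set h : ℝ → ℝ := fun t => t ^ (-(ν + 1)) * Real.exp (-a * t) with hhdef
  set h' : ℝ → ℝ := fun t =>
    (-(ν + 1)) * t ^ (-(ν + 1) - 1) * Real.exp (-a * t)
      + t ^ (-(ν + 1)) * (Real.exp (-a * t) * -a) with hh'def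
  have hh' : ∀ t : ℝ, 0 < t → HasDerivAt h (h' t) t := by
    intro t ht
    have he : HasDerivAt (fun t : ℝ => Real.exp (-a * t)) (Real.exp (-a * t) * -a) t := by
      simpa using (HasDerivAt.exp ((hasDerivAt_id t).const_mul (-a)))
    exact (Real.hasDerivAt_rpow_const (Or.inl ht.ne')).mul he
  -- g tends to 0
  have hg0 : Tendsto g atTop (𝓝 0) := by
    have h1 : Tendsto (fun t => ∫ x in (1:ℝ)..t, F x) atTop (𝓝 (g 1)) :=
      intervalIntegral_tendsto_integral_Ioi 1 (hInt 1 one_pos) tendsto_id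
    have h2 : Tendsto (fun t => g 1 - ∫ x in (1:ℝ)..t, F x) atTop (𝓝 (g 1 - g 1)) :=
      tendsto_const_nhds.sub h1
    rw [sub_self] at h2
    refine h2.congr' ?_
    filter_upwards [eventually_ge_atTop (1:ℝ)] with u hu
    have := hdecomp 1 u one_pos hu
    linarith
  -- h tends to 0
  have hh0 : Tendsto h atTop (𝓝 0) := by
    have h1 : Tendsto (fun t : ℝ => t ^ (-(ν + 1))) atTop (𝓝 0) :=
      tendsto_rpow_neg_atTop (by linarith)
    have hat : Tendsto (fun t : ℝ => a * t) atTop atTop := tendsto_id.const_mul_atTop ha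
    have h2 : Tendsto (fun t : ℝ => Real.exp (-a * t)) atTop (𝓝 0) := by
      have := Real.tendsto_exp_neg_atTop_nhds_zero.comp hat
      simpa only [Function.comp_def, neg_mul] using this
    have h3 := h1.mul h2
    rw [mul_zero] at h3
    exact h3
  -- h' nonzero and ratio limit
  have hratio : ∀ t : ℝ, 0 < t → (-F t) / h' t = t ^ (ν + 1) * f t / ((ν + 1) / t + a) := by
    intro t ht
    have hP : (0:ℝ) < t ^ (ν + 1) := Real.rpow_pos_of_pos ht _
    have hPn : t ^ (-(ν + 1)) = (t ^ (ν + 1))⁻¹ := Real.rpow_neg ht.le _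
    have hPn1 : t ^ (-(ν + 1) - 1) = (t ^ (ν + 1))⁻¹ / t := by
      rw [show -(ν+1) - 1 = -(ν+1) + (-1) by ring, Real.rpow_add ht, hPn,
        Real.rpow_neg_one]
      ring
    have hE : (0:ℝ) < Real.exp (-a * t) := Real.exp_pos _
    have hd : (0:ℝ) < (ν + 1) / t + a := by positivity
    have hfact : h' t = -(Real.exp (-a*t) * (t ^ (ν+1))⁻¹ * ((ν + 1) / t + a)) := by
      rw [hh'def]
      simp only [hPn, hPn1]
      field_simp
      ring
    rw [hfact, hFdef]
    simp only
    rw [div_neg, neg_div, neg_neg]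
    rw [div_eq_div_iff (by positivity) hd.ne']
    field_simp
  have hh'ne : ∀ t : ℝ, 0 < t → h' t ≠ 0 := by
    intro t ht
    have hP : (0:ℝ) < t ^ (-(ν + 1)) := Real.rpow_pos_of_pos ht _
    have hP1 : (0:ℝ) < t ^ (-(ν + 1) - 1) := Real.rpow_pos_of_pos ht _
    have hE : (0:ℝ) < Real.exp (-a * t) := Real.exp_pos _
    have : h' t < 0 := by
      rw [hh'def]
      simp only
      nlinarith [mul_pos hP1 hE, mul_pos hP hE]
    exact this.ne
  have hdiv : Tendsto (fun t => (-F t) / h' t) atTop (𝓝 (L / a)) := by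
    have hden : Tendsto (fun t : ℝ => (ν + 1) / t + a) atTop (𝓝 (0 + a)) :=
      (tendsto_const_nhds.div_atTop tendsto_id).add tendsto_const_nhds
    rw [zero_add] at hden
    have := hlim.div hden ha.ne'
    refine this.congr' ?_
    filter_upwards [eventually_gt_atTop (0:ℝ)] with t ht
    exact (hratio t ht).symm
  -- L'Hôpital
  have hlh : Tendsto (fun t => g t / h t) atTop (𝓝 (L / a)) := by
    refine HasDerivAt.lhopital_zero_atTop ?_ ?_ ?_ hg0 hh0 hdiv
    · filter_upwards [eventually_gt_atTop (0:ℝ)] with t ht using hg' t ht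
    · filter_upwards [eventually_gt_atTop (0:ℝ)] with t ht using hh' t ht
    · filter_upwards [eventually_gt_atTop (0:ℝ)] with t ht using hh'ne t ht
  refine hlh.congr' ?_
  filter_upwards [eventually_gt_atTop (0:ℝ)] with t ht
  have hP : (0:ℝ) < t ^ (ν + 1) := Real.rpow_pos_of_pos ht _
  have hPn : t ^ (-(ν + 1)) = (t ^ (ν + 1))⁻¹ := Real.rpow_neg ht.le _
  have hE : Real.exp (-a * t) = (Real.exp (a * t))⁻¹ := by
    rw [neg_mul, Real.exp_neg]
  rw [hhdef]
  simp only [hPn, hE]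
  rw [div_eq_mul_inv, mul_inv, inv_inv, inv_inv]
  ring
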